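/- Let f : ℝ → ℝ be continuous and T > 0. Let M be the running maximum of f on [0,T], extended constantly outside [0,T], and let μ_M be the Lebesgue–Stieltjes measure of M. Then μ_M( { s ∈ [0,T] : f(s) < M(s) } ) = 0; that is, the measure dM is carried by the set of times at which f attains its running maximum. -/

import Mathlib

open MeasureTheory

/-- The running maximum of `f` on `[0, T]`, extended constantly outside `[0, T]`:
`runMax f T t = max_{0 ≤ s ≤ min(max(t,0),T)} f(s)`. -/
noncomputable def runMax (f : ℝ → ℝ) (T t : ℝ) : ℝ :=
  sSup (f '' Set.Icc (0:ℝ) (max 0 (min t T)))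

lemma runMax_clamp (f : ℝ → ℝ) {T t : ℝ} (h0 : 0 ≤ t) (hT : t ≤ T) :
    runMax f T t = sSup (f '' Set.Icc (0:ℝ) t) := by
  unfold runMax
  rw [min_eq_left hT, max_eq_right h0]

lemma runMax_bdd (f : ℝ → ℝ) (hf : Continuous f) (x : ℝ) :
    BddAbove (f '' Set.Icc (0:ℝ) x) :=
  (isCompact_Icc.image hf).bddAbove

lemma runMax_mono (f : ℝ → ℝ) (hf : Continuous f) (T : ℝ) :
    Monotone (runMax f T) := by
  intro a b hab
  unfold runMax
  apply csSup_le_csSup (runMax_bdd f hf _)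
  · exact ⟨f 0, ⟨0, ⟨le_rfl, le_max_left _ _⟩, rfl⟩⟩
  · exact Set.image_mono (Set.Icc_subset_Icc le_rfl
      (max_le_max le_rfl (min_le_min hab le_rfl)))

/-- If `f ≤ c` on `[a,t]` with `0 ≤ a ≤ t ≤ T`, then `M t ≤ max (M a) c`. -/
lemma runMax_le_max (f : ℝ → ℝ) (hf : Continuous f) {T a t c : ℝ}
    (ha : 0 ≤ a) (hat : a ≤ t) (htT : t ≤ T)
    (h : ∀ u ∈ Set.Icc a t, f u ≤ c) :
    runMax f T t ≤ max (runMax f T a) c := by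
  rw [runMax_clamp f (ha.trans hat) htT]
  apply csSup_le
  · exact ⟨f 0, ⟨0, ⟨le_rfl, ha.trans hat⟩, rfl⟩⟩
  · rintro x ⟨u, hu, rfl⟩
    rcases le_total u a with h1 | h1
    · refine le_trans ?_ (le_max_left _ _)
      rw [runMax_clamp f ha (hat.trans htT)]
      exact le_csSup (runMax_bdd f hf a) ⟨u, ⟨hu.1, h1⟩, rfl⟩
    · exact le_trans (h u ⟨h1, hu.2⟩) (le_max_right _ _)

theorem runMax_measure_carried_on_attainment
    (f : ℝ → ℝ) (hf : Continuous f) (T : ℝ) (hT : 0 < T)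
    (μM : Measure ℝ)
    (hμM : ∀ a b : ℝ, a ≤ b →
      μM (Set.Ioc a b) = ENNReal.ofReal (runMax f T b - runMax f T a)) :
    μM {s ∈ Set.Icc (0:ℝ) T | f s < runMax f T s} = 0 := by
  set S := {s ∈ Set.Icc (0:ℝ) T | f s < runMax f T s}
  -- cover S by rational intervals of μM-measure zero
  have hcover : S ⊆ ⋃ p : {p : ℚ × ℚ // μM (Set.Ioc (p.1:ℝ) (p.2:ℝ)) = 0},
      Set.Ioc ((p.1.1 : ℝ)) ((p.1.2 : ℝ)) := by
    rintro s ⟨⟨hs0, hsT⟩, hslt⟩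
    set c : ℝ := (f s + runMax f T s) / 2 with hc
    have hfc : f s < c := by simp only [hc]; linarith
    have hcM : c < runMax f T s := by simp only [hc]; linarith
    -- s > 0
    have hspos : 0 < s := by
      rcases hs0.lt_or_eq with h | h
      · exact h
      · exfalso
        rw [← h] at hslt
        rw [runMax_clamp f le_rfl hT.le] at hslt
        simp at hslt
    -- neighborhood where f < c
    have hopen : IsOpen {u : ℝ | f u < c} := isOpen_lt hf continuous_const
    obtain ⟨η, hη, hball⟩ := Metric.isOpen_iff.1 hopen s hfc
    rw [Real.ball_eq_Ioo] at hball
    obtain ⟨a, ha1, ha2⟩ := exists_rat_btwn (show max (s - η) 0 < s by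
      simp [sub_lt_self, hspos, hη])
    obtain ⟨b, hb1, hb2⟩ := exists_rat_btwn (show s < s + η by linarith)
    have ha0 : (0:ℝ) ≤ (a:ℝ) := le_of_lt (lt_of_le_of_lt (le_max_right _ _) ha1)
    have haη : s - η < (a:ℝ) := lt_of_le_of_lt (le_max_left _ _) ha1
    set t : ℝ := min (b:ℝ) T with ht
    have hst : s ≤ t := le_min hb1.le hsT
    have hat : (a:ℝ) ≤ t := ha2.le.trans hst
    have htT : t ≤ T := min_le_right _ _
    have htb : t < s + η := lt_of_le_of_lt (min_le_left _ _) hb2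
    -- f ≤ c on [a, t]
    have hfle : ∀ u ∈ Set.Icc (a:ℝ) t, f u ≤ c := fun u hu =>
      (hball ⟨haη.trans_le hu.1, lt_of_le_of_lt hu.2 htb⟩).le
    -- M s = M a
    have hMsa : runMax f T s = runMax f T a := by
      have h1 := runMax_le_max f hf ha0 ha2.le hsT
        (fun u hu => hfle u ⟨hu.1, hu.2.trans hst⟩)
      have h2 := runMax_mono f hf T ha2.le
      rcases le_or_gt (runMax f T s) (runMax f T a) with h | h
      · exact le_antisymm h h2
      · exfalso
        rcases max_cases (runMax f T a) c with ⟨he, _⟩ | ⟨he, _⟩ <;> rw [he] at h1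
        · exact absurd h1 (not_le.2 h)
        · exact absurd h1 (not_le.2 hcM)
    -- M t = M a
    have hMta : runMax f T t = runMax f T a := by
      have h1 := runMax_le_max f hf ha0 hat htT hfle
      have h2 := runMax_mono f hf T hat
      rcases max_cases (runMax f T a) c with ⟨he, _⟩ | ⟨he, _⟩ <;> rw [he] at h1
      · exact le_antisymm h1 h2
      · exact le_antisymm (h1.trans (by rw [← hMsa] at *; exact hcM.le)) h2
    -- M b = M t
    have hMbt : runMax f T (b:ℝ) = runMax f T t := by
      unfold runMax
      have : min (b:ℝ) T = min t T := by rw [ht, min_eq_left htT]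
      rw [this]
    have hab : (a:ℝ) ≤ (b:ℝ) := ha2.le.trans hb1.le
    have hzero : μM (Set.Ioc ((a:ℝ)) ((b:ℝ))) = 0 := by
      rw [hμM a b hab, hMbt, hMta, sub_self, ENNReal.ofReal_zero]
    exact Set.mem_iUnion.2 ⟨⟨(a, b), hzero⟩, ⟨ha2, hb1.le⟩⟩
  refine le_antisymm ?_ zero_le
  calc μM S ≤ μM (⋃ p : {p : ℚ × ℚ // μM (Set.Ioc (p.1:ℝ) (p.2:ℝ)) = 0},
      Set.Ioc ((p.1.1 : ℝ)) ((p.1.2 : ℝ))) := measure_mono hcover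
    _ = 0 := measure_iUnion_null fun p => p.2
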